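/- Let (Ω, ℱ, P) be a probability space, let xₙ : Ω → ℝ^p be measurable random vectors and x₀ ∈ ℝ^p, let yₙ : Ω → ℝ be random variables and y₀ ∈ ℝ. Let cₙ, dₙ be positive reals with cₙ/dₙ → 0 and dₙ → ∞. Assume: (i) cₙ(xₙ − x₀) converges in distribution to a centered Gaussian random vector with covariance matrix Σ₁; (ii) dₙ(yₙ − y₀) converges in distribution to a centered normal random variable with variance σ₂²; (iii) there exists ε > 0 such that |yₙ(ω)| ≥ ε almost surely for every n, and |y₀| ≥ ε. Then cₙ(xₙ/yₙ − x₀/y₀) − cₙ(xₙ − x₀)/y₀ converges to 0 in probability; that is, cₙ(xₙ/yₙ − x₀/y₀) = cₙ(xₙ − x₀)/y₀ + o_P(1). -/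

import Mathlib

open MeasureTheory Filter Matrix ProbabilityTheory
open scoped Topology
open scoped ENNReal
open Set Metric

lemma tight_of_weak {Ω E : Type*} [MeasurableSpace Ω] [NormedAddCommGroup E]
    [MeasurableSpace E] [BorelSpace E]
    (P : Measure Ω) [IsProbabilityMeasure P]
    (Z : ℕ → Ω → E) (hZ : ∀ n, Measurable (Z n))
    (μ : Measure E) [IsProbabilityMeasure μ]
    (hconv : ∀ f : BoundedContinuousFunction E ℝ,
      Tendsto (fun n => ∫ ω, f (Z n ω) ∂P) atTop (𝓝 (∫ z, f z ∂μ)))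
    (η : ℝ≥0∞) (hη : 0 < η) :
    ∃ M : ℝ, ∀ᶠ n in atTop, P {ω | M ≤ ‖Z n ω‖} ≤ η := by
  rcases le_or_gt 1 η with hη1 | hη1
  · exact ⟨0, Eventually.of_forall fun n => (prob_le_one).trans hη1⟩
  have hηtop : η ≠ ∞ := (hη1.trans_le le_top).ne
  set η' : ℝ := η.toReal with hη'def
  have hη'pos : 0 < η' := ENNReal.toReal_pos hη.ne' hηtop
  -- choose M₀
  have hmono : Monotone fun k : ℕ => closedBall (0 : E) k := fun a b hab =>
    closedBall_subset_closedBall (by exact_mod_cast hab)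
  have hUnion : (⋃ k : ℕ, closedBall (0 : E) k) = univ := by
    refine eq_univ_iff_forall.2 fun z => ?_
    obtain ⟨k, hk⟩ := exists_nat_ge ‖z‖
    exact mem_iUnion.2 ⟨k, by simpa [mem_closedBall, dist_zero_right] using hk⟩
  have hT : Tendsto (fun k : ℕ => (μ (closedBall (0 : E) k)).toReal) atTop (𝓝 1) := by
    have h1 := tendsto_measure_iUnion_atTop (μ := μ) hmono
    rw [hUnion, measure_univ] at h1
    have := (ENNReal.tendsto_toReal (by simp)).comp h1
    exact this
  obtain ⟨M₀, hM₀⟩ := (hT.eventually (eventually_gt_nhds (by linarith : (1:ℝ) - η'/2 < 1))).exists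
  set t : ℝ := (M₀ : ℝ) + 1 with htdef
  set g : E → ℝ := fun z => max 0 (min 1 (t - ‖z‖)) with hgdef
  have hg0 : ∀ z, 0 ≤ g z := fun z => le_max_left _ _
  have hg1 : ∀ z, g z ≤ 1 := fun z => max_le zero_le_one (min_le_left _ _)
  have hgone : ∀ z : E, ‖z‖ ≤ M₀ → g z = 1 := by
    intro z hz
    have : (1:ℝ) ≤ t - ‖z‖ := by simp only [htdef]; linarith
    simp [hgdef, min_eq_left this, le_max_right]
  have hgzero : ∀ z : E, t ≤ ‖z‖ → g z = 0 := by
    intro z hz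
    have h1 : t - ‖z‖ ≤ 0 := by linarith
    have : min 1 (t - ‖z‖) ≤ 0 := le_trans (min_le_right _ _) h1
    simp [hgdef, max_eq_left this]
  set f : BoundedContinuousFunction E ℝ :=
    BoundedContinuousFunction.mkOfBound
      ⟨g, by unfold g; fun_prop⟩ 1
      (by
        intro a b
        rw [Real.dist_eq]
        have := hg0 a; have := hg1 a; have := hg0 b; have := hg1 b
        rw [abs_sub_le_iff]
        simp only [ContinuousMap.coe_mk]
        constructor <;> linarith) with hfdef
  have hfg : ∀ z, f z = g z := fun z => rfl
  -- lower bound on ∫ f dμ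
  have hind : Integrable ((closedBall (0:E) M₀).indicator fun _ => (1:ℝ)) μ :=
    (integrable_const 1).indicator measurableSet_closedBall
  have hlow : (1:ℝ) - η'/2 < ∫ z, f z ∂μ := by
    have hmon : ∫ z, (closedBall (0:E) M₀).indicator (fun _ => (1:ℝ)) z ∂μ ≤ ∫ z, f z ∂μ := by
      refine integral_mono hind (f.integrable μ) fun z => ?_
      by_cases hz : z ∈ closedBall (0:E) M₀
      · rw [indicator_of_mem hz, hfg, hgone z (by simpa [mem_closedBall, dist_zero_right] using hz)]
      · rw [indicator_of_notMem hz]; exact (hg0 z).trans (hfg z).ge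
    have : ∫ z, (closedBall (0:E) M₀).indicator (fun _ => (1:ℝ)) z ∂μ
        = (μ (closedBall (0:E) M₀)).toReal := by
      exact integral_indicator_one (μ := μ) (measurableSet_closedBall (x := (0:E)) (ε := (M₀:ℝ)))
    rw [this] at hmon
    linarith
  have hgt : (1:ℝ) - η' < ∫ z, f z ∂μ := by linarith
  refine ⟨t, ?_⟩
  filter_upwards [(hconv f).eventually (eventually_gt_nhds hgt)] with n hn
  -- now bound P {ω | t ≤ ‖Z n ω‖}
  have hSmeas : MeasurableSet {ω | t ≤ ‖Z n ω‖} :=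
    measurableSet_le measurable_const (hZ n).norm
  have hcomp : Integrable (fun ω => f (Z n ω)) P := by
    refine Integrable.mono' (integrable_const (1:ℝ))
      ((f.continuous.measurable.comp (hZ n)).aestronglyMeasurable) ?_
    filter_upwards with ω
    rw [Real.norm_eq_abs, abs_of_nonneg (by rw [hfg]; exact hg0 _)]
    rw [hfg]; exact hg1 _
  have hindP : Integrable ({ω | t ≤ ‖Z n ω‖}.indicator fun _ => (1:ℝ)) P :=
    (integrable_const 1).indicator hSmeas
  have key : (P {ω | t ≤ ‖Z n ω‖}).toReal ≤ 1 - ∫ ω, f (Z n ω) ∂P := by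
    have h1 : ∫ ω, ({ω | t ≤ ‖Z n ω‖}.indicator fun _ => (1:ℝ)) ω ∂P
        ≤ ∫ ω, (1 - f (Z n ω)) ∂P := by
      refine integral_mono hindP ((integrable_const 1).sub hcomp) fun ω => ?_
      by_cases hω : ω ∈ {ω | t ≤ ‖Z n ω‖}
      · rw [indicator_of_mem hω, hfg, hgzero _ hω]; norm_num
      · rw [indicator_of_notMem hω]
        have := hg1 (Z n ω); rw [← hfg] at this; linarith
    have h2 : ∫ ω, (1 - f (Z n ω)) ∂P = 1 - ∫ ω, f (Z n ω) ∂P := by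
      rw [integral_sub (integrable_const 1) hcomp]
      simp
    have h3 : ∫ ω, ({ω | t ≤ ‖Z n ω‖}.indicator fun _ => (1:ℝ)) ω ∂P
        = (P {ω | t ≤ ‖Z n ω‖}).toReal := by
      exact integral_indicator_one (μ := P) hSmeas
    rw [h3, h2] at h1
    exact h1
  have key2 : (P {ω | t ≤ ‖Z n ω‖}).toReal ≤ η' := by linarith
  calc P {ω | t ≤ ‖Z n ω‖}
      = ENNReal.ofReal (P {ω | t ≤ ‖Z n ω‖}).toReal := (ENNReal.ofReal_toReal (measure_ne_top _ _)).symm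
    _ ≤ ENNReal.ofReal η' := ENNReal.ofReal_le_ofReal key2
    _ = η := ENNReal.ofReal_toReal hηtop


/-- Slutsky-type lemma (Lemma 2, quotient form): if `cₙ(xₙ − x₀)` converges in
distribution to a centered Gaussian vector with covariance `Σ₁`, `dₙ(yₙ − y₀)`
converges in distribution to a centered normal with variance `σ₂²`, `cₙ/dₙ → 0`,
`dₙ → ∞`, and `yₙ, y₀` are bounded away from zero, then
`cₙ(xₙ/yₙ − x₀/y₀) − cₙ(xₙ − x₀)/y₀` converges to `0` in probability. -/
theorem stmt_5 {Ω : Type*} [MeasurableSpace Ω] (P : Measure Ω) [IsProbabilityMeasure P]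
    (p : ℕ) (x : ℕ → Ω → Fin p → ℝ) (x₀ : Fin p → ℝ)
    (y : ℕ → Ω → ℝ) (y₀ : ℝ)
    (hxm : ∀ n, Measurable (x n)) (hym : ∀ n, Measurable (y n))
    (c d : ℕ → ℝ) (hc : ∀ n, 0 < c n) (hd : ∀ n, 0 < d n)
    (hcd : Tendsto (fun n => c n / d n) atTop (𝓝 0))
    (hdtop : Tendsto d atTop atTop)
    (S₁ : Matrix (Fin p) (Fin p) ℝ) (σ₂sq : NNReal)
    (μ₁ : Measure (Fin p → ℝ)) [IsProbabilityMeasure μ₁]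
    (hμ₁ : ∀ v : Fin p → ℝ,
      μ₁.map (fun z => v ⬝ᵥ z) = gaussianReal 0 (Real.toNNReal (v ⬝ᵥ S₁ *ᵥ v)))
    (hxconv : ∀ f : BoundedContinuousFunction (Fin p → ℝ) ℝ,
      Tendsto (fun n => ∫ ω, f (c n • (x n ω - x₀)) ∂P) atTop (𝓝 (∫ z, f z ∂μ₁)))
    (hyconv : ∀ f : BoundedContinuousFunction ℝ ℝ,
      Tendsto (fun n => ∫ ω, f (d n * (y n ω - y₀)) ∂P) atTop
        (𝓝 (∫ z, f z ∂(gaussianReal 0 σ₂sq))))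
    (ε : ℝ) (hε : 0 < ε) (hyn : ∀ n, ∀ᵐ ω ∂P, ε ≤ |y n ω|) (hy₀ : ε ≤ |y₀|) :
    TendstoInMeasure P
      (fun n ω => c n • ((y n ω)⁻¹ • x n ω - y₀⁻¹ • x₀) - y₀⁻¹ • (c n • (x n ω - x₀)))
      atTop (fun _ => (0 : Fin p → ℝ)) := by
  have hy₀ne : y₀ ≠ 0 := fun h => by rw [h, abs_zero] at hy₀; linarith
  -- tightness of V n ω = c n • (x n ω - x₀) and W n ω = d n * (y n ω - y₀)
  have hVmeas : ∀ n, Measurable (fun ω => c n • (x n ω - x₀)) := fun n =>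
    ((hxm n).sub measurable_const).const_smul (c n)
  have hWmeas : ∀ n, Measurable (fun ω => d n * (y n ω - y₀)) := fun n =>
    ((hym n).sub measurable_const).const_mul (d n)
  rw [tendstoInMeasure_iff_dist]
  intro δ hδ
  rw [ENNReal.tendsto_atTop_zero]
  intro η hη
  obtain ⟨M₁, hM₁⟩ := tight_of_weak P _ hVmeas μ₁ hxconv (η / 2) (ENNReal.half_pos hη.ne')
  obtain ⟨M₂, hM₂⟩ := tight_of_weak P _ hWmeas (gaussianReal 0 σ₂sq) hyconv (η / 2)
    (ENNReal.half_pos hη.ne')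
  set M₁' : ℝ := max M₁ 1 with hM₁'def
  set M₂' : ℝ := max M₂ 1 with hM₂'def
  have hM₁'pos : 0 < M₁' := lt_of_lt_of_le one_pos (le_max_right _ _)
  have hM₂'pos : 0 < M₂' := lt_of_lt_of_le one_pos (le_max_right _ _)
  -- the deterministic bound
  set b : ℕ → ℝ := fun n => (M₂' * M₁' / ε ^ 2) * (d n)⁻¹ + (M₂' * ‖x₀‖ / ε ^ 2) * (c n / d n)
    with hbdef
  have hb : Tendsto b atTop (𝓝 0) := by
    have h1 : Tendsto (fun n => (d n)⁻¹) atTop (𝓝 0) := tendsto_inv_atTop_zero.comp hdtop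
    have := (h1.const_mul (M₂' * M₁' / ε ^ 2)).add (hcd.const_mul (M₂' * ‖x₀‖ / ε ^ 2))
    simpa using this
  have hbev : ∀ᶠ n in atTop, b n < δ := hb.eventually (eventually_lt_nhds hδ)
  have hall : ∀ᶠ n in atTop,
      P {ω | δ ≤ dist ((c n • ((y n ω)⁻¹ • x n ω - y₀⁻¹ • x₀) - y₀⁻¹ • (c n • (x n ω - x₀))))
        (0 : Fin p → ℝ)} ≤ η := by
    filter_upwards [hM₁, hM₂, hbev] with n h1 h2 h3
    have hsub : {ω | δ ≤ dist ((c n • ((y n ω)⁻¹ • x n ω - y₀⁻¹ • x₀)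
          - y₀⁻¹ • (c n • (x n ω - x₀)))) (0 : Fin p → ℝ)}
        ⊆ {ω | ¬ (ε ≤ |y n ω|)} ∪
          ({ω | M₁' ≤ ‖c n • (x n ω - x₀)‖} ∪ {ω | M₂' ≤ ‖d n * (y n ω - y₀)‖}) := by
      intro ω hω
      simp only [Set.mem_setOf_eq, dist_zero_right] at hω
      by_contra hmem
      simp only [Set.mem_union, Set.mem_setOf_eq, not_or, not_le, not_not] at hmem
      obtain ⟨hyω, hVω, hWω⟩ := hmem
      push_neg at hyω
      have hynω : y n ω ≠ 0 := fun h => by rw [h, abs_zero] at hyω; linarith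
      set r : ℝ := (y₀ - y n ω) / (y n ω * y₀) with hrdef
      have hident : c n • ((y n ω)⁻¹ • x n ω - y₀⁻¹ • x₀) - y₀⁻¹ • (c n • (x n ω - x₀))
          = r • (c n • (x n ω - x₀)) + (c n * r) • x₀ := by
        funext i
        simp only [Pi.smul_apply, Pi.sub_apply, Pi.add_apply, smul_eq_mul, hrdef]
        field_simp
        ring
      -- bounds
      have hεy : ε ≤ |y n ω| := hyω
      have hr : |r| ≤ ‖d n * (y n ω - y₀)‖ / (d n * ε ^ 2) := by
        rw [hrdef, abs_div, abs_mul, Real.norm_eq_abs, abs_mul, abs_of_pos (hd n)]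
        rw [div_le_div_iff₀ (mul_pos (abs_pos.2 hynω) (abs_pos.2 hy₀ne)) (mul_pos (hd n) (pow_pos hε 2))]
        have h'' : ε ^ 2 ≤ |y n ω| * |y₀| := by
          rw [sq]; exact mul_le_mul hεy hy₀ hε.le (abs_nonneg _)
        rw [abs_sub_comm y₀ (y n ω)]
        nlinarith [mul_le_mul_of_nonneg_left h''
          (mul_nonneg (hd n).le (abs_nonneg (y n ω - y₀)))]
      have hWd : ‖d n * (y n ω - y₀)‖ / (d n * ε ^ 2) ≤ M₂' / (d n * ε ^ 2) :=
        div_le_div_of_nonneg_right hWω.le (mul_pos (hd n) (pow_pos hε 2)).le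
      have hrM : |r| ≤ M₂' / (d n * ε ^ 2) := hr.trans hWd
      have hnorm : ‖c n • ((y n ω)⁻¹ • x n ω - y₀⁻¹ • x₀) - y₀⁻¹ • (c n • (x n ω - x₀))‖
          ≤ |r| * ‖c n • (x n ω - x₀)‖ + c n * |r| * ‖x₀‖ := by
        rw [hident]
        refine (norm_add_le _ _).trans ?_
        simp only [norm_smul, Real.norm_eq_abs, abs_mul, abs_of_pos (hc n)]
        exact le_of_eq (by ring)
      have hstep1 : |r| * ‖c n • (x n ω - x₀)‖ ≤ (M₂' / (d n * ε ^ 2)) * M₁' :=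
        mul_le_mul hrM hVω.le (norm_nonneg _)
          (div_nonneg hM₂'pos.le (mul_pos (hd n) (pow_pos hε 2)).le)
      have hstep2 : c n * |r| * ‖x₀‖ ≤ c n * (M₂' / (d n * ε ^ 2)) * ‖x₀‖ :=
        mul_le_mul_of_nonneg_right (mul_le_mul_of_nonneg_left hrM (hc n).le) (norm_nonneg _)
      have heq1 : (M₂' / (d n * ε ^ 2)) * M₁' = (M₂' * M₁' / ε ^ 2) * (d n)⁻¹ := by
        field_simp
      have heq2 : c n * (M₂' / (d n * ε ^ 2)) * ‖x₀‖ = (M₂' * ‖x₀‖ / ε ^ 2) * (c n / d n) := by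
        field_simp
      have : ‖c n • ((y n ω)⁻¹ • x n ω - y₀⁻¹ • x₀) - y₀⁻¹ • (c n • (x n ω - x₀))‖ ≤ b n := by
        rw [hbdef]
        calc _ ≤ |r| * ‖c n • (x n ω - x₀)‖ + c n * |r| * ‖x₀‖ := hnorm
          _ ≤ (M₂' / (d n * ε ^ 2)) * M₁' + c n * (M₂' / (d n * ε ^ 2)) * ‖x₀‖ :=
              add_le_add hstep1 hstep2
          _ = _ := by rw [heq1, heq2]
      linarith [hω.trans this]
    have hnull : P {ω | ¬ (ε ≤ |y n ω|)} = 0 := ae_iff.mp (hyn n)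
    calc P _ ≤ P ({ω | ¬ (ε ≤ |y n ω|)} ∪
          ({ω | M₁' ≤ ‖c n • (x n ω - x₀)‖} ∪ {ω | M₂' ≤ ‖d n * (y n ω - y₀)‖})) :=
          measure_mono hsub
      _ ≤ P {ω | ¬ (ε ≤ |y n ω|)}
          + P ({ω | M₁' ≤ ‖c n • (x n ω - x₀)‖} ∪ {ω | M₂' ≤ ‖d n * (y n ω - y₀)‖}) :=
          measure_union_le _ _
      _ ≤ 0 + (P {ω | M₁' ≤ ‖c n • (x n ω - x₀)‖} + P {ω | M₂' ≤ ‖d n * (y n ω - y₀)‖}) := by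
          rw [hnull]; exact add_le_add le_rfl (measure_union_le _ _)
      _ ≤ 0 + (η / 2 + η / 2) := by
          refine add_le_add le_rfl (add_le_add ?_ ?_)
          · refine le_trans (measure_mono ?_) h1
            intro ω hω
            simp only [Set.mem_setOf_eq] at hω ⊢
            exact le_trans (le_max_left _ _) hω
          · refine le_trans (measure_mono ?_) h2
            intro ω hω
            simp only [Set.mem_setOf_eq] at hω ⊢
            exact le_trans (le_max_left _ _) hω
      _ = η := by rw [zero_add, ENNReal.add_halves]
  obtain ⟨N, hN⟩ := eventually_atTop.mp hall
  exact ⟨N, hN⟩
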